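/- Let $n \geq 7$ and $2 \leq k \leq n/2$. Let $\delta \in S_n$ have cycle type $[1^{n-2k}, 2^k]$ (product of $k$ disjoint transpositions), let $\delta'$ have cycle type $[1^{n-2k}, 4^1, 2^{k-2}]$, and let $\tau$ be a transposition. Then $|C_{S_n}(\delta')|$ divides $|C_{S_n}(\delta)|$, and $|C_{S_n}(\delta')|$ divides $|C_{S_n}(\tau)|$; consequently $|\delta^{S_n}|$ divides $|\delta'^{S_n}|$ and $|\tau^{S_n}|$ divides $|\delta'^{S_n}|$. -/

import Mathlib

/-- The size of the conjugacy class of `g` in `G`. -/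
noncomputable def clSize {G : Type*} [Group G] (g : G) : ℕ := Nat.card {x : G // IsConj g x}

open Equiv Equiv.Perm Subgroup

variable {G : Type*} [Group G]


lemma clSize_mul_card_centralizer [Finite G] (g : G) :
    clSize g * Nat.card (Subgroup.centralizer {g}) = Nat.card G := by
  classical
  cases nonempty_fintype G
  have h1 : clSize g = Nat.card (MulAction.orbit (ConjAct G) g) := by
    apply Nat.card_congr
    apply Equiv.subtypeEquivRight
    intro x
    rw [ConjAct.mem_orbit_conjAct, isConj_comm]
  have h2 : Nat.card (Subgroup.centralizer ({g} : Set G)) =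
      Nat.card (MulAction.stabilizer (ConjAct G) g) := by
    apply Nat.card_congr
    exact (Equiv.subtypeEquiv ConjAct.toConjAct.toEquiv (fun y => by
      rw [Subgroup.centralizer_eq_comap_stabilizer]; rfl)).symm.symm
  rw [h1, h2]
  have := MulAction.card_orbit_mul_card_stabilizer_eq_card_group (ConjAct G) g
  simp only [Nat.card_eq_fintype_card]
  convert this using 2
  rfl

lemma card_centralizer_conj (x g : G) :
    Nat.card (Subgroup.centralizer ({x * g * x⁻¹} : Set G)) =
      Nat.card (Subgroup.centralizer ({g} : Set G)) := by
  have hmap : Subgroup.centralizer ({x * g * x⁻¹} : Set G) =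
      Subgroup.map (MulAut.conj x).toMonoidHom (Subgroup.centralizer {g}) := by
    ext y
    simp only [Subgroup.mem_map, Subgroup.mem_centralizer_singleton_iff,
      MulEquiv.coe_toMonoidHom, MulAut.conj_apply]
    constructor
    · intro h
      refine ⟨x⁻¹ * y * x, ?_, by group⟩
      have h2 := congrArg (fun z => x⁻¹ * z * x) h
      simp only [mul_assoc, inv_mul_cancel_left, mul_inv_cancel, mul_one] at h2 ⊢
      simpa [mul_assoc] using h2
    · rintro ⟨z, hz, rfl⟩
      have h2 := congrArg (fun w => x * w * x⁻¹) hz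
      simp only [mul_assoc, inv_mul_cancel_left, mul_inv_cancel, mul_one] at h2 ⊢
      simpa [mul_assoc] using h2
  rw [hmap]
  exact Nat.card_congr (Subgroup.equivMapOfInjective _ _ (MulAut.conj x).injective).symm.toEquiv

lemma card_centralizer_isConj {a b : G} (h : IsConj a b) :
    Nat.card (Subgroup.centralizer ({a} : Set G)) =
      Nat.card (Subgroup.centralizer ({b} : Set G)) := by
  obtain ⟨x, hx⟩ := h
  have : (x : G) * a * (x : G)⁻¹ = b := by
    have h3 := hx.eq
    rw [h3]; group
  rw [← this, card_centralizer_conj]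

section Cycle
variable {α : Type*} [Fintype α] [DecidableEq α]

lemma disjoint_ofSubtype_compl (c : Perm α) (σ : Perm {x // x ∉ c.support}) :
    Perm.Disjoint c (Perm.ofSubtype σ) := by
  intro x
  by_cases hx : x ∈ c.support
  · right
    exact Perm.ofSubtype_apply_of_not_mem σ (by simpa using hx)
  · left
    simpa [Perm.mem_support, not_not] using hx

lemma card_centralizer_isCycle {c : Perm α} (hc : c.IsCycle) :
    Nat.card (Subgroup.centralizer ({c} : Set (Perm α))) =
      c.support.card * (Fintype.card α - c.support.card).factorial := by
  classical
  set f : Subgroup.zpowers c × Perm {x // x ∉ c.support} →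
      Subgroup.centralizer ({c} : Set (Perm α)) := fun p =>
    ⟨(p.1 : Perm α) * Perm.ofSubtype p.2, by
      rw [Subgroup.mem_centralizer_singleton_iff]
      obtain ⟨z, hz⟩ := p.1
      obtain ⟨i, rfl⟩ := hz
      have h1 : Commute c (c ^ i) := Commute.zpow_right rfl i
      have h2 : Commute c (Perm.ofSubtype p.2) :=
        (disjoint_ofSubtype_compl c p.2).commute
      exact (h1.mul_right h2).eq.symm⟩ with hf
  have hbij : Function.Bijective f := by
    constructor
    · rintro ⟨⟨z1, hz1⟩, σ1⟩ ⟨⟨z2, hz2⟩, σ2⟩ h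
      simp only [hf, Subtype.mk.injEq] at h
      have key : z2⁻¹ * z1 = Perm.ofSubtype σ2 * (Perm.ofSubtype σ1)⁻¹ := by
        rw [inv_mul_eq_iff_eq_mul, ← mul_assoc, ← h, mul_assoc]
        simp
      have hL : ∀ x ∉ c.support, (z2⁻¹ * z1) x = x := by
        intro x hx
        have hsub : (z2⁻¹ * z1).support ⊆ c.support := by
          obtain ⟨i, rfl⟩ := hz1
          obtain ⟨j, rfl⟩ := hz2
          calc (( c ^ j)⁻¹ * c ^ i).support = (c ^ (i - j)).support := by
                rw [← zpow_neg, ← zpow_add, neg_add_eq_sub]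
          _ ⊆ c.support := Perm.support_zpow_le c _
        exact Perm.notMem_support.mp (fun h' => hx (hsub h'))
      have hR : ∀ x ∈ c.support, (Perm.ofSubtype σ2 * (Perm.ofSubtype σ1)⁻¹) x = x := by
        intro x hx
        have h1 : (Perm.ofSubtype σ1)⁻¹ x = x := by
          rw [← map_inv]
          exact Perm.ofSubtype_apply_of_not_mem _ (by simpa using hx)
        rw [Perm.mul_apply, h1]
        exact Perm.ofSubtype_apply_of_not_mem _ (by simpa using hx)
      have hone : z2⁻¹ * z1 = 1 := by
        ext x
        by_cases hx : x ∈ c.support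
        · rw [key]; exact hR x hx
        · exact hL x hx
      have hz : z1 = z2 := by
        have := hone
        rwa [inv_mul_eq_one, eq_comm] at this
      have hσ : σ1 = σ2 := by
        have hone' : Perm.ofSubtype σ2 * (Perm.ofSubtype σ1)⁻¹ = 1 := by
          rw [← key, hone]
        have : Perm.ofSubtype σ2 = Perm.ofSubtype σ1 := by
          rwa [mul_inv_eq_one] at hone'
        ext x
        have := Perm.ext_iff.mp this x
        rw [Perm.ofSubtype_apply_of_mem σ2 x.2, Perm.ofSubtype_apply_of_mem σ1 x.2] at this
        exact this.symm
      simp [hz, hσ]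
    · rintro ⟨g, hg⟩
      rw [Subgroup.mem_centralizer_singleton_iff] at hg
      have hcomm : Commute g c := hg
      obtain ⟨hc', hmem⟩ := hc.commute_iff.mp hcomm
      set z : Perm α := Perm.ofSubtype (g.subtypePerm hc') with hzdef
      have hinv : ∀ x : α, x ∉ c.support ↔ g x ∉ c.support := fun x => not_iff_not.mpr (hc' x).symm
      set σ : Perm {x // x ∉ c.support} := g.subtypePerm (fun x => (hinv x).symm) with hσdef
      refine ⟨⟨⟨z, hmem⟩, σ⟩, ?_⟩
      simp only [hf]
      ext1
      ext x
      simp only [Perm.mul_apply]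
      by_cases hx : x ∈ c.support
      · have h1 : Perm.ofSubtype σ x = x :=
          Perm.ofSubtype_apply_of_not_mem _ (by simpa using hx)
        rw [h1, hzdef, Perm.ofSubtype_apply_of_mem _ hx]
        rfl
      · have h1 : Perm.ofSubtype σ x = g x := Perm.ofSubtype_apply_of_mem σ hx
        rw [h1, hzdef, Perm.ofSubtype_apply_of_not_mem]
        exact (hinv x).mp hx
  have hcard := Nat.card_congr (Equiv.ofBijective f hbij)
  rw [← hcard, Nat.card_prod, Nat.card_zpowers, hc.orderOf, Nat.card_eq_fintype_card,
    Fintype.card_perm, Fintype.card_subtype_compl, Fintype.card_coe]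

end Cycle

theorem statement_12 (n k : ℕ) (hn : 7 ≤ n) (hk : 2 ≤ k) (hkn : 2 * k ≤ n)
    (δ δ' τ : Equiv.Perm (Fin n))
    (hδ : δ.cycleType = Multiset.replicate k 2)
    (hδ' : δ'.cycleType = 4 ::ₘ Multiset.replicate (k - 2) 2)
    (hτ : τ.cycleType = {2}) :
    Nat.card (Subgroup.centralizer {δ'} : Subgroup (Equiv.Perm (Fin n))) ∣
      Nat.card (Subgroup.centralizer {δ} : Subgroup (Equiv.Perm (Fin n))) ∧
    Nat.card (Subgroup.centralizer {δ'} : Subgroup (Equiv.Perm (Fin n))) ∣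
      Nat.card (Subgroup.centralizer {τ} : Subgroup (Equiv.Perm (Fin n))) ∧
    clSize δ ∣ clSize δ' ∧ clSize τ ∣ clSize δ' := by
  classical
  -- the unique 4-cycle factor of δ'
  have h4 : (4 : ℕ) ∈ δ'.cycleType := by rw [hδ']; exact Multiset.mem_cons_self _ _
  obtain ⟨c, hcmem, hc4⟩ : ∃ c ∈ δ'.cycleFactorsFinset, c.support.card = 4 := by
    rw [cycleType_def, Multiset.mem_map] at h4
    obtain ⟨c, hc, h⟩ := h4
    exact ⟨c, by simpa using hc, h⟩
  have hccyc : c.IsCycle := (Equiv.Perm.mem_cycleFactorsFinset_iff.mp hcmem).1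
  have hcount : δ'.cycleType.count 4 = 1 := by
    rw [hδ']
    simp [Multiset.count_cons, Multiset.count_replicate]
  have huniq : ∀ d ∈ δ'.cycleFactorsFinset, d.support.card = 4 → d = c := by
    intro d hd hd4
    have hcd := Equiv.Perm.CycleType.count_def (σ := δ') 4
    rw [hcount] at hcd
    have hsub := Fintype.card_le_one_iff.mp (le_of_eq hcd.symm)
    have h := hsub ⟨⟨d, hd⟩, hd4⟩ ⟨⟨c, hcmem⟩, hc4⟩
    simpa [Subtype.ext_iff] using h
  -- centralizer of δ' centralizes c
  have hle : Subgroup.centralizer ({δ'} : Set (Perm (Fin n))) ≤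
      Subgroup.centralizer ({c} : Set (Perm (Fin n))) := by
    intro x hx
    rw [Subgroup.mem_centralizer_singleton_iff] at hx ⊢
    have hδ'conj : x * δ' * x⁻¹ = δ' := by
      rw [mul_inv_eq_iff_eq_mul, hx]
    have hconj : x * c * x⁻¹ ∈ δ'.cycleFactorsFinset := by
      have := (Equiv.Perm.mem_cycleFactorsFinset_conj δ' x c).mpr hcmem
      rwa [hδ'conj] at this
    have hcc : x * c * x⁻¹ = c :=
      huniq _ hconj (by rw [Equiv.Perm.card_support_conj]; exact hc4)
    conv_rhs => rw [← hcc]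
    rw [inv_mul_cancel_right]
  have hle2 : Subgroup.centralizer ({δ'} : Set (Perm (Fin n))) ≤
      Subgroup.centralizer ({c * δ'} : Set (Perm (Fin n))) := by
    intro x hx
    have h1 := hle hx
    rw [Subgroup.mem_centralizer_singleton_iff] at hx h1 ⊢
    rw [← mul_assoc, h1, mul_assoc, hx, ← mul_assoc]
  -- cycle type computation for c * δ'
  set ρ : Perm (Fin n) := δ' * c⁻¹ with hρdef
  have hdisj : Perm.Disjoint ρ c :=
    Equiv.Perm.disjoint_mul_inv_of_mem_cycleFactorsFinset hcmem
  have hρc : ρ * c = δ' := by rw [hρdef, inv_mul_cancel_right]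
  have hctype : c.cycleType = {4} := by
    rw [hccyc.cycleType, hc4]
  have hρtype : ρ.cycleType = Multiset.replicate (k - 2) 2 := by
    have h1 : ρ.cycleType + c.cycleType = δ'.cycleType := by
      rw [← hρc] at hδ' ⊢
      exact hdisj.cycleType_mul.symm
    rw [hctype, hδ'] at h1
    have h2 : (4 : ℕ) ::ₘ ρ.cycleType = 4 ::ₘ Multiset.replicate (k - 2) 2 := by
      rw [← h1, add_comm, ← Multiset.singleton_add]
    exact (Multiset.cons_inj_right 4).mp h2
  have horder : orderOf c = 4 := by rw [hccyc.orderOf, hc4]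
  have hc2type : (c ^ 2).cycleType = Multiset.replicate 2 2 := by
    have ho2 : orderOf (c ^ 2) = 2 := by
      rw [orderOf_pow, horder]; decide
    have hp : (orderOf (c ^ 2)).Prime := by rw [ho2]; exact Nat.prime_two
    obtain ⟨t, ht⟩ := Equiv.Perm.cycleType_prime_order hp
    rw [ho2] at ht
    have hsupp : (c ^ 2).support = c.support :=
      hccyc.support_pow_of_pos_of_lt_orderOf (by norm_num) (by omega)
    have hsum : (c ^ 2).cycleType.sum = 4 := by
      rw [Equiv.Perm.sum_cycleType, hsupp, hc4]
    rw [ht, Multiset.sum_replicate, smul_eq_mul] at hsum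
    have : t = 1 := by omega
    rw [ht, this]
  have hmultype : (c * δ').cycleType = Multiset.replicate k 2 := by
    have hcomm : Commute ρ c := hdisj.commute
    have heq : c * δ' = ρ * c ^ 2 := by
      rw [← hρc, ← mul_assoc, ← hcomm.eq, mul_assoc, sq]
    have hdisj2 : Perm.Disjoint ρ (c ^ 2) := by
      have := hdisj.pow_disjoint_pow 1 2
      rwa [pow_one] at this
    rw [heq, hdisj2.cycleType_mul, hρtype, hc2type, ← Multiset.replicate_add]
    congr 1
    omega
  -- divisibility 1
  have hconj1 : IsConj (c * δ') δ := by
    rw [Equiv.Perm.isConj_iff_cycleType_eq, hmultype, hδ]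
  have div1 : Nat.card (Subgroup.centralizer ({δ'} : Set (Perm (Fin n)))) ∣
      Nat.card (Subgroup.centralizer ({δ} : Set (Perm (Fin n)))) := by
    rw [← card_centralizer_isConj hconj1]
    exact Subgroup.card_dvd_of_le hle2
  -- divisibility 2
  have hτcyc : τ.IsCycle := by
    rw [← Equiv.Perm.card_cycleType_eq_one, hτ]; rfl
  have hτ2 : τ.support.card = 2 := by
    rw [← Equiv.Perm.sum_cycleType, hτ]; rfl
  have hcardτ : Nat.card (Subgroup.centralizer ({τ} : Set (Perm (Fin n)))) =
      2 * (n - 2).factorial := by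
    rw [card_centralizer_isCycle hτcyc, hτ2, Fintype.card_fin]
  have hcardc : Nat.card (Subgroup.centralizer ({c} : Set (Perm (Fin n)))) =
      4 * (n - 4).factorial := by
    rw [card_centralizer_isCycle hccyc, hc4, Fintype.card_fin]
  obtain ⟨m, rfl⟩ : ∃ m, n = m + 7 := ⟨n - 7, by omega⟩
  have hnum : 4 * (m + 7 - 4).factorial ∣ 2 * (m + 7 - 2).factorial := by
    have e1 : m + 7 - 4 = m + 3 := by omega
    have e2 : m + 7 - 2 = m + 5 := by omega
    rw [e1, e2]
    obtain ⟨e, he⟩ := Nat.even_mul_succ_self (m + 4)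
    refine ⟨e, ?_⟩
    have : (m + 5).factorial = (m + 5) * ((m + 4) * (m + 3).factorial) := by
      rw [Nat.factorial_succ, Nat.factorial_succ]
    rw [this]
    have h5 : (m + 4) * (m + 5) = e + e := he
    calc 2 * ((m + 5) * ((m + 4) * (m + 3).factorial))
        = 2 * (((m + 4) * (m + 5)) * (m + 3).factorial) := by ring
      _ = 2 * ((e + e) * (m + 3).factorial) := by rw [h5]
      _ = 4 * (m + 3).factorial * e := by ring
  have div2 : Nat.card (Subgroup.centralizer ({δ'} : Set (Perm (Fin (m + 7))))) ∣
      Nat.card (Subgroup.centralizer ({τ} : Set (Perm (Fin (m + 7))))) := by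
    calc Nat.card (Subgroup.centralizer ({δ'} : Set (Perm (Fin (m + 7)))))
        ∣ Nat.card (Subgroup.centralizer ({c} : Set (Perm (Fin (m + 7))))) :=
          Subgroup.card_dvd_of_le hle
      _ = 4 * (m + 7 - 4).factorial := hcardc
      _ ∣ 2 * (m + 7 - 2).factorial := hnum
      _ = Nat.card (Subgroup.centralizer ({τ} : Set (Perm (Fin (m + 7))))) := hcardτ.symm
  have hpos : 0 < Nat.card (Subgroup.centralizer ({δ'} : Set (Perm (Fin (m + 7))))) :=
    Nat.card_pos
  have h1 := clSize_mul_card_centralizer δ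
  have h2 := clSize_mul_card_centralizer δ'
  have h3 := clSize_mul_card_centralizer τ
  refine ⟨div1, div2, ?_, ?_⟩
  · obtain ⟨r, hr⟩ := div1
    refine ⟨r, ?_⟩
    apply Nat.eq_of_mul_eq_mul_right hpos
    rw [h2, mul_assoc, mul_comm r, ← hr, h1]
  · obtain ⟨r, hr⟩ := div2
    refine ⟨r, ?_⟩
    apply Nat.eq_of_mul_eq_mul_right hpos
    rw [h2, mul_assoc, mul_comm r, ← hr, h3]
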